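/- Let T ∈ G_γ^d with γ strictly positive, non-increasing with limit zero, summable, and γ_1 = 1, and let φ ∈ F_β^r with β non-decreasing, β_1 = 1, and 1/β converging to zero. Let φ_m be the Galerkin solution of g = Tφ, i.e. the element of span(ψ_1,…,ψ_m) with [φ_m]_m = [T]_m^{−1}[g]_m where g := Tφ. Then for any strictly positive sequence w = (w_j) such that (w_j/β_j) is non-increasing, and all m ∈ ℕ: ‖φ − φ_m‖_w² ≤ 34·d⁸·r·(w_m/β_m)·max( 1, (γ_m²/w_m)·max_{1≤j≤m}(w_j/γ_j²) ), where ‖h‖_w² := Σ_j w_j⟨h,ψ_j⟩². -/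

import Mathlib

open scoped RealInnerProductSpace Classical ENNReal NNReal
open Matrix MeasureTheory

noncomputable section

variable {H : Type} [NormedAddCommGroup H] [InnerProductSpace ℝ H] [CompleteSpace H]

/-- Spectral norm of a real matrix (largest singular value). -/
def specNorm {m : ℕ} (A : Matrix (Fin m) (Fin m) ℝ) : ℝ :=
  ‖Matrix.toEuclideanCLM (𝕜 := ℝ) A‖

/-- Galerkin matrix `[T]_m = (⟪ψ_j, T ψ_k⟫)_{1≤j,k≤m}` (0-indexed). -/
def opMat (ψ : HilbertBasis ℕ ℝ H) (T : H →L[ℝ] H) (m : ℕ) :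
    Matrix (Fin m) (Fin m) ℝ :=
  Matrix.of fun j k => ⟪ψ (j : ℕ), T (ψ (k : ℕ))⟫

/-- The ellipsoid `F_β^r`. -/
def memF (ψ : HilbertBasis ℕ ℝ H) (β : ℕ → ℝ) (r : ℝ) (h : H) : Prop :=
  Summable (fun j => β j * ⟪h, ψ j⟫ ^ 2) ∧ (∑' j, β j * ⟪h, ψ j⟫ ^ 2) ≤ r

/-- The class `G_γ^d` of strictly positive nuclear operators with sandwiched norm. -/
def memG (ψ : HilbertBasis ℕ ℝ H) (γ : ℕ → ℝ) (d : ℝ) (T : H →L[ℝ] H) : Prop :=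
  (∀ x y : H, ⟪T x, y⟫ = ⟪x, T y⟫) ∧ (∀ h : H, h ≠ 0 → 0 < ⟪T h, h⟫) ∧
    Summable (fun j => ⟪T (ψ j), ψ j⟫) ∧
    ∀ h : H,
      (d ^ 2)⁻¹ * (∑' j, γ j ^ 2 * ⟪h, ψ j⟫ ^ 2) ≤ ‖T h‖ ^ 2 ∧
      ‖T h‖ ^ 2 ≤ d ^ 2 * (∑' j, γ j ^ 2 * ⟪h, ψ j⟫ ^ 2)

/-- Coefficient vector `[g]_m` of `g = Γ φ`. -/
def gvec (ψ : HilbertBasis ℕ ℝ H) (Γ : H →L[ℝ] H) (φ : H) (m : ℕ) : Fin m → ℝ :=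
  fun j => ⟪Γ φ, ψ (j : ℕ)⟫

/-- Coefficients `[Γ]_m⁻¹ [g]_m` of the Galerkin solution. -/
def galCoef (ψ : HilbertBasis ℕ ℝ H) (Γ : H →L[ℝ] H) (φ : H) (m : ℕ) : Fin m → ℝ :=
  (opMat ψ Γ m)⁻¹ *ᵥ gvec ψ Γ φ m

/-- The Galerkin solution `φ_m`. -/
def galerkin (ψ : HilbertBasis ℕ ℝ H) (Γ : H →L[ℝ] H) (φ : H) (m : ℕ) : H :=
  ∑ j : Fin m, galCoef ψ Γ φ m j • (ψ (j : ℕ))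

/-- The linear functional `ℓ(h) = Σ_j ℓ_j ⟨h, ψ_j⟩`. -/
def ellOf (ψ : HilbertBasis ℕ ℝ H) (lc : ℕ → ℝ) (h : H) : ℝ := ∑' j, lc j * ⟪h, ψ j⟫

/-- `[ℓ]_m`. -/
def ellvec (lc : ℕ → ℝ) (m : ℕ) : Fin m → ℝ := fun j => lc (j : ℕ)

/-- Weighted (squared) norm `‖h‖_w²`. -/
def wnorm2 (ψ : HilbertBasis ℕ ℝ H) (w : ℕ → ℝ) (h : H) : ℝ := ∑' j, w j * ⟪h, ψ j⟫ ^ 2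

/-- `V_m^γ = Σ_{j=1}^m ℓ_j²/γ_j`. -/
def Vgam (lc γ : ℕ → ℝ) (m : ℕ) : ℝ := ∑ j ∈ Finset.range m, lc j ^ 2 / γ j

/-- `V_m = max_{1≤k≤m} [ℓ]_k^t [Γ]_k⁻¹ [ℓ]_k`. -/
def Vmax (ψ : HilbertBasis ℕ ℝ H) (lc : ℕ → ℝ) (Γ : H →L[ℝ] H) (m : ℕ) : ℝ :=
  ⨆ k : Fin m, ellvec lc (k + 1) ⬝ᵥ ((opMat ψ Γ (k + 1))⁻¹ *ᵥ ellvec lc (k + 1))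

/-- `σ_m² = 2(σ_Y² + [g]_m^t [Γ]_m⁻¹ [g]_m)` with `σ_Y² = σ² + ⟨Γφ,φ⟩`. -/
def sigmaSqm (ψ : HilbertBasis ℕ ℝ H) (Γ : H →L[ℝ] H) (φ : H) (σ : ℝ) (m : ℕ) : ℝ :=
  2 * ((σ ^ 2 + ⟪Γ φ, φ⟫) + gvec ψ Γ φ m ⬝ᵥ ((opMat ψ Γ m)⁻¹ *ᵥ gvec ψ Γ φ m))

/-- Theoretical penalty `p_m = 100 σ_m² V_m (1 + log n)/n`. -/
def penTheo (ψ : HilbertBasis ℕ ℝ H) (lc : ℕ → ℝ) (Γ : H →L[ℝ] H) (φ : H) (σ : ℝ)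
    (n m : ℕ) : ℝ :=
  100 * sigmaSqm ψ Γ φ σ m * Vmax ψ lc Γ m * ((1 + Real.log n) / n)

/-- `R_m^ℓ[x]` (here `m ≥ 1`; 0-indexed sequences, so `γ_m` is `γ (m-1)`). -/
def Rml (lc β γ : ℕ → ℝ) (x : ℝ) (m : ℕ) : ℝ :=
  max (∑' j, if m ≤ j then lc j ^ 2 / β j else 0)
    (max (γ (m - 1) / β (m - 1)) x * ∑ j ∈ Finset.range m, lc j ^ 2 / γ j)

/-- `R_*^ℓ[x] = min_{m ≥ 1} R_m^ℓ[x]`. -/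
def Rstar (lc β γ : ℕ → ℝ) (x : ℝ) : ℝ := ⨅ m : ℕ, Rml lc β γ x (m + 1)

variable {Ω : Type}

/-- Empirical covariance matrix `[Γ̂]_m`. -/
def hatGam (ψ : HilbertBasis ℕ ℝ H) (n : ℕ) (X : Fin n → Ω → H) (m : ℕ) (ω : Ω) :
    Matrix (Fin m) (Fin m) ℝ :=
  Matrix.of fun j k => (n : ℝ)⁻¹ * ∑ i, ⟪X i ω, ψ (j : ℕ)⟫ * ⟪X i ω, ψ (k : ℕ)⟫

/-- Empirical vector `[ĝ]_m`. -/
def hatgv (ψ : HilbertBasis ℕ ℝ H) (n : ℕ) (X : Fin n → Ω → H) (Y : Fin n → Ω → ℝ)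
    (m : ℕ) (ω : Ω) : Fin m → ℝ :=
  fun j => (n : ℝ)⁻¹ * ∑ i, Y i ω * ⟪X i ω, ψ (j : ℕ)⟫

/-- The thresholded plug-in estimator `ℓ̂_m = ℓ(φ̂_m)`. -/
def hatell (ψ : HilbertBasis ℕ ℝ H) (lc : ℕ → ℝ) (n : ℕ) (X : Fin n → Ω → H)
    (Y : Fin n → Ω → ℝ) (m : ℕ) (ω : Ω) : ℝ :=
  if IsUnit (hatGam ψ n X m ω).det ∧ specNorm (hatGam ψ n X m ω)⁻¹ ≤ (n : ℝ) then
    ellvec lc m ⬝ᵥ ((hatGam ψ n X m ω)⁻¹ *ᵥ hatgv ψ n X Y m ω)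
  else 0

/-- `M_n^ℓ`. -/
def Mln (lc : ℕ → ℝ) (n : ℕ) : ℕ :=
  sSup {m | 1 ≤ m ∧ (m : ℝ) ≤ (n : ℝ) ^ ((1 : ℝ) / 4) ∧
    (∑ j ∈ Finset.range m, lc j ^ 2) ≤ (n : ℝ)}

/-- Spectral norm of the inverse, `+∞` if singular. -/
def invNormE {m : ℕ} (A : Matrix (Fin m) (Fin m) ℝ) : ℝ≥0∞ :=
  if IsUnit A.det then ENNReal.ofReal (specNorm A⁻¹) else ⊤

/-- Random upper bound `M̂_n`. -/
def Mhat (ψ : HilbertBasis ℕ ℝ H) (lc : ℕ → ℝ) (n : ℕ) (X : Fin n → Ω → H) (ω : Ω) : ℕ :=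
  let S := {m | 2 ≤ m ∧ m ≤ Mln lc n ∧
    ENNReal.ofReal ((n : ℝ) / (1 + Real.log n)) <
      invNormE (hatGam ψ n X m ω) * ENNReal.ofReal (∑ j ∈ Finset.range m, lc j ^ 2)}
  if S.Nonempty then sInf S - 1 else Mln lc n

/-- Deterministic `M_n(a)` (with `a_m = a (m-1)` in 0-indexing). -/
def Mna (lc a : ℕ → ℝ) (n : ℕ) : ℕ :=
  let S := {m | 2 ≤ m ∧ m ≤ Mln lc n ∧
    (n : ℝ) / (1 + Real.log n) < a (m - 1) * ∑ j ∈ Finset.range m, lc j ^ 2}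
  if S.Nonempty then sInf S - 1 else Mln lc n

/-- `V̂_m = max_{1≤k≤m} [ℓ]_k^t [Γ̂]_k⁻¹ [ℓ]_k`. -/
def hatVmax (ψ : HilbertBasis ℕ ℝ H) (lc : ℕ → ℝ) (n : ℕ) (X : Fin n → Ω → H)
    (m : ℕ) (ω : Ω) : ℝ :=
  ⨆ k : Fin m, ellvec lc (k + 1) ⬝ᵥ ((hatGam ψ n X (k + 1) ω)⁻¹ *ᵥ ellvec lc (k + 1))

/-- Stochastic penalty `p̂_m`. -/
def hatpen (ψ : HilbertBasis ℕ ℝ H) (lc : ℕ → ℝ) (n : ℕ) (X : Fin n → Ω → H)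
    (Y : Fin n → Ω → ℝ) (m : ℕ) (ω : Ω) : ℝ :=
  700 * (2 * (n : ℝ)⁻¹ * ∑ i, (Y i ω) ^ 2
      + 2 * (hatgv ψ n X Y m ω ⬝ᵥ ((hatGam ψ n X m ω)⁻¹ *ᵥ hatgv ψ n X Y m ω)))
    * hatVmax ψ lc n X m ω * ((1 + Real.log n) / n)

/-- Contrast `κ_m`. -/
def contrast (ψ : HilbertBasis ℕ ℝ H) (lc : ℕ → ℝ) (n : ℕ) (X : Fin n → Ω → H)
    (Y : Fin n → Ω → ℝ) (m : ℕ) (ω : Ω) : ℝ :=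
  sSup {x | ∃ k, m ≤ k ∧ k ≤ Mhat ψ lc n X ω ∧
    x = (hatell ψ lc n X Y k ω - hatell ψ lc n X Y m ω) ^ 2 - hatpen ψ lc n X Y k ω}

/-- The fully data-driven dimension `m̂` (smallest minimizer of `κ + p̂`). -/
def mhat (ψ : HilbertBasis ℕ ℝ H) (lc : ℕ → ℝ) (n : ℕ) (X : Fin n → Ω → H)
    (Y : Fin n → Ω → ℝ) (ω : Ω) : ℕ :=
  sInf {m | 1 ≤ m ∧ m ≤ Mhat ψ lc n X ω ∧ ∀ k, 1 ≤ k → k ≤ Mhat ψ lc n X ω →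
    contrast ψ lc n X Y m ω + hatpen ψ lc n X Y m ω ≤
      contrast ψ lc n X Y k ω + hatpen ψ lc n X Y k ω}

/-- The functional linear model with jointly Gaussian regressor and error,
observed through an i.i.d. sample of size `n`. -/
structure FLModel [MeasurableSpace H] (ψ : HilbertBasis ℕ ℝ H)
    (σ : ℝ) (φ : H) (Γ : H →L[ℝ] H)
    [MeasurableSpace Ω] (P : Measure Ω) (n : ℕ)
    (X : Fin n → Ω → H) (Y : Fin n → Ω → ℝ) (ε : Fin n → Ω → ℝ) : Prop where
  measX : ∀ i, Measurable (X i)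
  measEps : ∀ i, Measurable (ε i)
  modelEq : ∀ i ω, Y i ω = ⟪φ, X i ω⟫ + σ * ε i ω
  indep : ProbabilityTheory.iIndepFun (fun i ω => (X i ω, ε i ω)) P
  identDistrib : ∀ i j, Measure.map (fun ω => (X i ω, ε i ω)) P
      = Measure.map (fun ω => (X j ω, ε j ω)) P
  centeredX : ∀ i (h : H), ∫ ω, ⟪X i ω, h⟫ ∂P = 0
  sqIntX : ∀ i, Integrable (fun ω => ‖X i ω‖ ^ 2) P
  epsMean : ∀ i, ∫ ω, ε i ω ∂P = 0
  epsVar : ∀ i, ∫ ω, (ε i ω) ^ 2 ∂P = 1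
  uncorr : ∀ i (h : H), ∫ ω, ε i ω * ⟪X i ω, h⟫ ∂P = 0
  gaussian : ∀ i (k : ℕ) (hs : Fin k → H) (c : Fin k → ℝ) (c' : ℝ), ∃ v : NNReal,
      Measure.map (fun ω => (∑ j, c j * ⟪X i ω, hs j⟫) + c' * ε i ω) P
        = ProbabilityTheory.gaussianReal 0 v
  covOp : ∀ i (h h' : H), ⟪Γ h, h'⟫ = ∫ ω, ⟪X i ω, h⟫ * ⟪X i ω, h'⟫ ∂P

namespace Stmt7Aux

lemma sq_le_imp {a b : ℝ} (hb : 0 ≤ b) (h : a^2 ≤ b^2) (ha : 0 ≤ a) : a ≤ b := by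
  nlinarith

lemma parseval_summable (ψ : HilbertBasis ℕ ℝ H) (x : H) :
    Summable (fun j => ⟪x, ψ j⟫^2) := by
  have h : Memℓp (fun j => (ψ.repr x : ℕ → ℝ) j) 2 := (ψ.repr x).2
  have h2 : Summable (fun j => ‖(ψ.repr x : ℕ → ℝ) j‖ ^ (2:ℝ≥0∞).toReal) := by
    rw [← memℓp_gen_iff (by norm_num)]
    exact h
  have h3 : Summable (fun j => ⟪ψ j, x⟫^2) := by
    refine h2.congr (fun j => ?_)
    rw [ψ.repr_apply_apply]
    have : ((2:ℝ≥0∞).toReal) = ((2:ℕ):ℝ) := by norm_num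
    rw [this, Real.rpow_natCast]
    simp [sq_abs]
  exact h3.congr (fun j => by rw [real_inner_comm])

lemma parseval (ψ : HilbertBasis ℕ ℝ H) (x : H) :
    ∑' j, ⟪x, ψ j⟫^2 = ‖x‖^2 := by
  have := ψ.tsum_inner_mul_inner x x
  rw [← real_inner_self_eq_norm_sq]
  rw [← this]
  refine tsum_congr (fun j => ?_)
  rw [real_inner_comm x (ψ j), sq]

lemma fin_comb_inner (ψ : HilbertBasis ℕ ℝ H) (c : ℕ → ℝ) (J : Finset ℕ) (k : ℕ) :
    ⟪(∑ j ∈ J, c j • (ψ j : H)), ψ k⟫ = if k ∈ J then c k else 0 := by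
  rw [sum_inner]
  have horth := ψ.orthonormal
  rw [orthonormal_iff_ite] at horth
  by_cases hk : k ∈ J
  · rw [Finset.sum_eq_single k]
    · simp [real_inner_smul_left, horth k k, hk, ψ.orthonormal.1 k]
    · intro b _ hbk
      simp [real_inner_smul_left, horth b k, hbk]
    · intro h; exact absurd hk h
  · simp only [hk, if_false]
    refine Finset.sum_eq_zero (fun b hb => ?_)
    have hbk : b ≠ k := fun h => hk (h ▸ hb)
    simp [real_inner_smul_left, horth b k, hbk]


section Op

variable (ψ : HilbertBasis ℕ ℝ H) (γ : ℕ → ℝ) (d : ℝ) (T : H →L[ℝ] H)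

/-- upper sandwich -/
lemma hTup (hT : ∀ h : H, ‖T h‖ ^ 2 ≤ d ^ 2 * (∑' j, γ j ^ 2 * ⟪h, ψ j⟫ ^ 2)) (z : H) :
    ‖T z‖ ^ 2 ≤ d ^ 2 * (∑' j, γ j ^ 2 * ⟪z, ψ j⟫ ^ 2) := hT z

lemma gam_le_one (hγ1 : γ 0 = 1) (hγanti : Antitone γ) (j : ℕ) : γ j ≤ 1 := by
  rw [← hγ1]; exact hγanti (Nat.zero_le j)

lemma gam_sq_summable (hγpos : ∀ j, 0 < γ j) (hγ1 : γ 0 = 1) (hγanti : Antitone γ) (z : H) :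
    Summable (fun j => γ j ^ 2 * ⟪z, ψ j⟫ ^ 2) := by
  refine Summable.of_nonneg_of_le (fun j => by positivity) (fun j => ?_) (parseval_summable ψ z)
  have h1 : γ j ≤ 1 := gam_le_one γ hγ1 hγanti j
  have h2 : γ j ^ 2 ≤ 1 := by nlinarith [(hγpos j).le]
  calc γ j ^ 2 * ⟪z, ψ j⟫ ^ 2 ≤ 1 * ⟪z, ψ j⟫ ^ 2 :=
        mul_le_mul_of_nonneg_right h2 (sq_nonneg _)
    _ = ⟪z, ψ j⟫ ^ 2 := one_mul _

lemma norm_T_le (hγpos : ∀ j, 0 < γ j) (hγ1 : γ 0 = 1) (hγanti : Antitone γ)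
    (hd : 1 ≤ d)
    (hT : ∀ h : H, ‖T h‖ ^ 2 ≤ d ^ 2 * (∑' j, γ j ^ 2 * ⟪h, ψ j⟫ ^ 2)) (z : H) :
    ‖T z‖ ≤ d * ‖z‖ := by
  have h1 : ‖T z‖ ^ 2 ≤ d ^ 2 * (∑' j, γ j ^ 2 * ⟪z, ψ j⟫ ^ 2) := hT z
  have h2 : (∑' j, γ j ^ 2 * ⟪z, ψ j⟫ ^ 2) ≤ ∑' j, ⟪z, ψ j⟫ ^ 2 := by
    refine Summable.tsum_le_tsum (fun j => ?_) (gam_sq_summable ψ γ hγpos hγ1 hγanti z)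
      (parseval_summable ψ z)
    have h1 : γ j ≤ 1 := gam_le_one γ hγ1 hγanti j
    have h2 : γ j ^ 2 ≤ 1 := by nlinarith [(hγpos j).le]
    calc γ j ^ 2 * ⟪z, ψ j⟫ ^ 2 ≤ 1 * ⟪z, ψ j⟫ ^ 2 :=
          mul_le_mul_of_nonneg_right h2 (sq_nonneg _)
      _ = ⟪z, ψ j⟫ ^ 2 := one_mul _
  rw [parseval] at h2
  refine sq_le_imp (by positivity) ?_ (norm_nonneg _)
  calc ‖T z‖ ^ 2 ≤ d ^ 2 * (∑' j, γ j ^ 2 * ⟪z, ψ j⟫ ^ 2) := h1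
    _ ≤ d ^ 2 * ‖z‖ ^ 2 := by nlinarith [sq_nonneg d]
    _ = (d * ‖z‖) ^ 2 := by ring

/-- finite partial sums of `γ⁻²⟪Tu,ψ⟫²` are bounded -/
lemma U_finset (hγpos : ∀ j, 0 < γ j) (hd : 1 ≤ d)
    (hsym : ∀ x y : H, ⟪T x, y⟫ = ⟪x, T y⟫)
    (hT : ∀ h : H, ‖T h‖ ^ 2 ≤ d ^ 2 * (∑' j, γ j ^ 2 * ⟪h, ψ j⟫ ^ 2))
    (u : H) (J : Finset ℕ) :
    ∑ j ∈ J, ((γ j)⁻¹) ^ 2 * ⟪T u, ψ j⟫ ^ 2 ≤ d ^ 2 * ‖u‖ ^ 2 := by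
  set q : ℝ := ∑ j ∈ J, ((γ j)⁻¹) ^ 2 * ⟪T u, ψ j⟫ ^ 2 with hq
  have hq0 : 0 ≤ q := Finset.sum_nonneg (fun j _ => by positivity)
  set wv : H := ∑ j ∈ J, (((γ j)⁻¹ ^ 2) * ⟪T u, ψ j⟫) • (ψ j : H) with hwv
  have hcoef : ∀ k, ⟪wv, ψ k⟫ = if k ∈ J then ((γ k)⁻¹ ^ 2) * ⟪T u, ψ k⟫ else 0 := by
    intro k; exact fin_comb_inner ψ _ J k
  have h1 : ⟪T u, wv⟫ = q := by
    rw [hwv, inner_sum, hq]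
    refine Finset.sum_congr rfl (fun j _ => ?_)
    rw [real_inner_smul_right]; ring
  have h2 : ‖T wv‖ ^ 2 ≤ d ^ 2 * q := by
    refine le_trans (hT wv) ?_
    have h3 : (∑' k, γ k ^ 2 * ⟪wv, ψ k⟫ ^ 2)
        = ∑ k ∈ J, γ k ^ 2 * ⟪wv, ψ k⟫ ^ 2 := by
      refine tsum_eq_sum (fun k hk => ?_)
      rw [hcoef k, if_neg hk]; ring
    rw [h3]
    have h4 : ∑ k ∈ J, γ k ^ 2 * ⟪wv, ψ k⟫ ^ 2 ≤ q := by
      rw [hq]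
      refine Finset.sum_le_sum (fun k hk => ?_)
      rw [hcoef k, if_pos hk]
      have hgk := hγpos k
      have e1 : γ k ^ 2 * ((γ k)⁻¹ ^ 2 * ⟪T u, ψ k⟫) ^ 2
          = ((γ k)⁻¹)^2 * ⟪T u, ψ k⟫ ^ 2 * (γ k * (γ k)⁻¹) ^ 2 := by ring
      rw [e1, mul_inv_cancel₀ hgk.ne']
      simp
    nlinarith [sq_nonneg d]
  have h5 : q ≤ ‖u‖ * ‖T wv‖ := by
    rw [← h1, hsym u wv]
    exact real_inner_le_norm u (T wv)
  -- conclude q ≤ d² ‖u‖²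
  rcases eq_or_lt_of_le hq0 with h | h
  · rw [← h]; positivity
  · have h6 : q ^ 2 ≤ ‖u‖^2 * (d^2 * q) := by
      nlinarith [norm_nonneg (T wv), norm_nonneg u]
    refine le_of_mul_le_mul_right ?_ h
    calc q * q = q ^ 2 := by ring
      _ ≤ ‖u‖^2 * (d^2*q) := h6
      _ = d^2*‖u‖^2 * q := by ring

lemma U_summable (hγpos : ∀ j, 0 < γ j) (hd : 1 ≤ d)
    (hsym : ∀ x y : H, ⟪T x, y⟫ = ⟪x, T y⟫)
    (hT : ∀ h : H, ‖T h‖ ^ 2 ≤ d ^ 2 * (∑' j, γ j ^ 2 * ⟪h, ψ j⟫ ^ 2)) (u : H) :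
    Summable (fun j => ((γ j)⁻¹) ^ 2 * ⟪T u, ψ j⟫ ^ 2) := by
  exact summable_of_sum_le (c := d^2*‖u‖^2) (fun j => by positivity)
    (fun J => U_finset ψ γ d T hγpos hd hsym hT u J)

lemma U_tsum (hγpos : ∀ j, 0 < γ j) (hd : 1 ≤ d)
    (hsym : ∀ x y : H, ⟪T x, y⟫ = ⟪x, T y⟫)
    (hT : ∀ h : H, ‖T h‖ ^ 2 ≤ d ^ 2 * (∑' j, γ j ^ 2 * ⟪h, ψ j⟫ ^ 2)) (u : H) :
    (∑' j, ((γ j)⁻¹) ^ 2 * ⟪T u, ψ j⟫ ^ 2) ≤ d ^ 2 * ‖u‖ ^ 2 := by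
  refine Summable.tsum_le_of_sum_le (U_summable ψ γ d T hγpos hd hsym hT u) ?_
  intro J; exact U_finset ψ γ d T hγpos hd hsym hT u J

lemma V_summable (hγpos : ∀ j, 0 < γ j) (hγ1 : γ 0 = 1) (hγanti : Antitone γ) (hd : 1 ≤ d)
    (hsym : ∀ x y : H, ⟪T x, y⟫ = ⟪x, T y⟫)
    (hT : ∀ h : H, ‖T h‖ ^ 2 ≤ d ^ 2 * (∑' j, γ j ^ 2 * ⟪h, ψ j⟫ ^ 2)) (u v : H) :
    Summable (fun j => (γ j)⁻¹ * (⟪T u, ψ j⟫ * ⟪T v, ψ j⟫)) := by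
  have key : ∀ j, |(γ j)⁻¹ * (⟪T u, ψ j⟫ * ⟪T v, ψ j⟫)|
      ≤ ((γ j)⁻¹)^2 * ⟪T u, ψ j⟫ ^ 2 + ((γ j)⁻¹)^2 * ⟪T v, ψ j⟫ ^ 2 := by
    intro j
    have hg := hγpos j
    have hg1 : (1:ℝ) ≤ (γ j)⁻¹ := by
      have hc := mul_inv_cancel₀ hg.ne'
      have hle := gam_le_one γ hγ1 hγanti j
      have hginv : 0 < (γ j)⁻¹ := by positivity
      nlinarith
    have hginv : 0 < (γ j)⁻¹ := by positivity
    rw [abs_mul, abs_mul, abs_of_pos hginv]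
    nlinarith [sq_nonneg (|⟪T u, ψ j⟫| - |⟪T v, ψ j⟫|), abs_nonneg (⟪T u, ψ j⟫),
      abs_nonneg (⟪T v, ψ j⟫), sq_abs (⟪T u, ψ j⟫), sq_abs (⟪T v, ψ j⟫),
      mul_le_mul_of_nonneg_right hg1 (mul_nonneg (abs_nonneg (⟪T u, ψ j⟫)) (abs_nonneg (⟪T v, ψ j⟫)))]
  refine Summable.of_abs ?_
  refine Summable.of_nonneg_of_le (fun j => abs_nonneg _) key ?_
  exact Summable.add (U_summable ψ γ d T hγpos hd hsym hT u) (U_summable ψ γ d T hγpos hd hsym hT v)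


/-- The key inequality: `∑ γ_j⁻¹ ⟪Tx,ψ_j⟫² ≤ d ⟪Tx,x⟫`. -/
lemma key_star (hγpos : ∀ j, 0 < γ j) (hγ1 : γ 0 = 1) (hγanti : Antitone γ) (hd : 1 ≤ d)
    (hsym : ∀ x y : H, ⟪T x, y⟫ = ⟪x, T y⟫)
    (hpos : ∀ h : H, h ≠ 0 → 0 < ⟪T h, h⟫)
    (hT : ∀ h : H, ‖T h‖ ^ 2 ≤ d ^ 2 * (∑' j, γ j ^ 2 * ⟪h, ψ j⟫ ^ 2)) (x : H) :
    (∑' j, (γ j)⁻¹ * (⟪T x, ψ j⟫ * ⟪T x, ψ j⟫)) ≤ d * ⟪T x, x⟫ := by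
  have hd0 : (0:ℝ) < d := lt_of_lt_of_le one_pos hd
  have hTnn : ∀ h : H, 0 ≤ ⟪T h, h⟫ := by
    intro h
    by_cases hh : h = 0
    · simp [hh]
    · exact (hpos h hh).le
  have habs : ∀ a : ℝ, ‖a‖ ^ ((2:ℝ≥0∞).toReal) = a ^ 2 := by
    intro a
    rw [show ((2:ℝ≥0∞).toReal) = ((2:ℕ):ℝ) by norm_num, Real.rpow_natCast]
    simp [Real.norm_eq_abs, sq_abs]
  have hsq : ∀ u : H, Summable (fun j => ((γ j)⁻¹ * ⟪T u, ψ j⟫) ^ 2) := by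
    intro u
    refine (U_summable ψ γ d T hγpos hd hsym hT u).congr (fun j => ?_)
    ring
  have hmem : ∀ u : H, Memℓp (fun j => (γ j)⁻¹ * ⟪T u, ψ j⟫) 2 := by
    intro u
    refine memℓp_gen ?_
    exact ((hsq u).congr (fun j => (habs _).symm))
  let Cu : H → H := fun u => ψ.repr.symm ⟨fun j => (γ j)⁻¹ * ⟪T u, ψ j⟫, hmem u⟩
  have hco : ∀ u k, ⟪ψ k, Cu u⟫ = (γ k)⁻¹ * ⟪T u, ψ k⟫ := by
    intro u k
    rw [← ψ.repr_apply_apply]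
    show (ψ.repr (ψ.repr.symm ⟨fun j => (γ j)⁻¹ * ⟪T u, ψ j⟫, hmem u⟩) : ℕ → ℝ) k
      = (γ k)⁻¹ * ⟪T u, ψ k⟫
    rw [LinearIsometryEquiv.apply_symm_apply]
  have hCnorm : ∀ u, ‖Cu u‖ ≤ d * ‖u‖ := by
    intro u
    refine sq_le_imp (by positivity) ?_ (norm_nonneg _)
    have h1 : ‖Cu u‖ ^ 2 = ∑' j, ⟪Cu u, ψ j⟫ ^ 2 := (parseval ψ (Cu u)).symm
    rw [h1]
    have h2 : (∑' j, ⟪Cu u, ψ j⟫ ^ 2) = ∑' j, ((γ j)⁻¹)^2 * ⟪T u, ψ j⟫ ^ 2 := by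
      refine tsum_congr (fun j => ?_)
      rw [real_inner_comm, hco u j]; ring
    rw [h2]
    calc (∑' j, ((γ j)⁻¹)^2 * ⟪T u, ψ j⟫ ^ 2) ≤ d^2*‖u‖^2 :=
          U_tsum ψ γ d T hγpos hd hsym hT u
      _ = (d*‖u‖)^2 := by ring
  have hpair : ∀ z u, ⟪z, Cu u⟫ = ∑' j, ((γ j)⁻¹ * ⟪T u, ψ j⟫) * ⟪z, ψ j⟫ := by
    intro z u
    have := ψ.tsum_inner_mul_inner z (Cu u)
    rw [← this]
    exact tsum_congr (fun j => by rw [hco u j, mul_comm])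
  -- the s-form
  set Sf : H → H → ℝ := fun u v => ∑' j, (γ j)⁻¹ * (⟪T u, ψ j⟫ * ⟪T v, ψ j⟫) with hSf
  have hSform : ∀ u v, ⟪T (Cu u), v⟫ = Sf u v := by
    intro u v
    have h1 : ⟪T (Cu u), v⟫ = ∑' j, ((γ j)⁻¹ * ⟪T u, ψ j⟫) * ⟪T v, ψ j⟫ := by
      rw [hsym, real_inner_comm]; exact hpair (T v) u
    rw [h1]
    exact tsum_congr (fun j => by ring)
  have hScomm : ∀ u v, Sf u v = Sf v u := by
    intro u v; exact tsum_congr (fun j => by ring)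
  have hSnn : ∀ u, 0 ≤ Sf u u := by
    intro u
    refine tsum_nonneg (fun j => ?_)
    have := (hγpos j)
    have h1 : 0 ≤ (γ j)⁻¹ := by positivity
    nlinarith [sq_nonneg (⟪T u, ψ j⟫)]
  -- Cauchy-Schwarz for the T-form
  have hBCS : ∀ u v, ⟪T u, v⟫ ^ 2 ≤ ⟪T u, u⟫ * ⟪T v, v⟫ := by
    intro u v
    have hquad : ∀ t : ℝ, 0 ≤ ⟪T v, v⟫ * (t*t) + (2*⟪T u, v⟫) * t + ⟪T u, u⟫ := by
      intro t
      have h0 := hTnn (u + t • v)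
      have hexp : ⟪T (u + t • v), u + t • v⟫
          = ⟪T v, v⟫ * (t*t) + (2*⟪T u, v⟫) * t + ⟪T u, u⟫ := by
        have huv : ⟪T v, u⟫ = ⟪T u, v⟫ := by rw [hsym, real_inner_comm]
        simp only [map_add, ContinuousLinearMap.map_smul, inner_add_left, inner_add_right,
          real_inner_smul_left, real_inner_smul_right]
        rw [huv]; ring
      linarith [hexp ▸ h0]
    have := discrim_le_zero hquad
    rw [discrim] at this
    nlinarith
  -- Cauchy-Schwarz for the s-form
  have hSCS : ∀ u v, Sf u v ^ 2 ≤ Sf u u * Sf v v := by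
    intro u v
    have hsummuv : ∀ a b : H, Summable (fun j => (γ j)⁻¹ * (⟪T a, ψ j⟫ * ⟪T b, ψ j⟫)) :=
      fun a b => V_summable ψ γ d T hγpos hγ1 hγanti hd hsym hT a b
    have hquad : ∀ t : ℝ, 0 ≤ Sf v v * (t*t) + (2*Sf u v) * t + Sf u u := by
      intro t
      have h0 : 0 ≤ Sf (u + t • v) (u + t • v) := hSnn _
      have hexp : Sf (u + t • v) (u + t • v)
          = Sf v v * (t*t) + (2*Sf u v) * t + Sf u u := by
        have hterm : ∀ j, (γ j)⁻¹ * (⟪T (u + t • v), ψ j⟫ * ⟪T (u + t • v), ψ j⟫)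
            = (t*t) * ((γ j)⁻¹ * (⟪T v, ψ j⟫ * ⟪T v, ψ j⟫))
              + t * (2 * ((γ j)⁻¹ * (⟪T u, ψ j⟫ * ⟪T v, ψ j⟫)))
              + (γ j)⁻¹ * (⟪T u, ψ j⟫ * ⟪T u, ψ j⟫) := by
          intro j
          simp only [map_add, ContinuousLinearMap.map_smul, inner_add_left,
            real_inner_smul_left]
          ring
        rw [hSf]
        simp only []
        rw [tsum_congr hterm]
        rw [Summable.tsum_add (((hsummuv v v).mul_left _).add ((hsummuv u v).mul_left _ |>.mul_left t))
              (hsummuv u u)]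
        rw [Summable.tsum_add ((hsummuv v v).mul_left _) ((hsummuv u v).mul_left 2 |>.mul_left t)]
        rw [tsum_mul_left, tsum_mul_left, tsum_mul_left]
        ring
      linarith [hexp ▸ h0]
    have := discrim_le_zero hquad
    rw [discrim] at this
    nlinarith
  -- iterates
  set xk : ℕ → H := fun k => Cu^[k] x with hxk
  have hxk0 : xk 0 = x := rfl
  have hxks : ∀ k, xk (k+1) = Cu (xk k) := by
    intro k
    simp only [hxk, Function.iterate_succ_apply']
  have hxknorm : ∀ k, ‖xk k‖ ≤ d^k * ‖x‖ := by
    intro k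
    induction k with
    | zero => simp [hxk0]
    | succ n ih =>
      rw [hxks n]
      calc ‖Cu (xk n)‖ ≤ d * ‖xk n‖ := hCnorm _
        _ ≤ d * (d^n * ‖x‖) := by
            exact mul_le_mul_of_nonneg_left ih hd0.le
        _ = d^(n+1) * ‖x‖ := by ring
  have hSformIt : ∀ a b, ⟪T (xk (a+1)), xk b⟫ = Sf (xk a) (xk b) := by
    intro a b
    rw [hxks a]
    exact hSform _ _
  set g : ℕ → ℝ := fun k => ⟪T (xk k), x⟫ with hg
  have hsym' : ∀ u v : H, ⟪T u, v⟫ = ⟪T v, u⟫ := by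
    intro u v; rw [hsym, real_inner_comm]
  have hshift : ∀ a b, ⟪T (xk a), xk b⟫ = g (a+b) := by
    intro a
    induction a with
    | zero =>
      intro b
      rw [hsym' (xk 0) (xk b), hxk0, Nat.zero_add]
    | succ n ih =>
      intro b
      rw [hxks n, hSform, hScomm, ← hSform, ← hxks b, hsym' (xk (b+1)) (xk n), ih (b+1)]
      congr 1
      omega
  have hg0 : g 0 = ⟪T x, x⟫ := by rw [hg]; simp [hxk0]
  have hg1 : g 1 = Sf x x := by
    show ⟪T (xk 1), x⟫ = Sf x x
    rw [← hxk0]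
    exact hSformIt 0 0
  have hgnn : ∀ k, 0 ≤ g k := by
    intro k
    rcases Nat.even_or_odd k with ⟨a, ha⟩ | ⟨a, ha⟩
    · have h1 : g k = ⟪T (xk a), xk a⟫ := by rw [ha]; exact (hshift a a).symm
      rw [h1]; exact hTnn _
    · have h1 : g k = Sf (xk a) (xk a) := by
        rw [show k = (a+1)+a by omega, ← hshift (a+1) a]
        exact hSformIt a a
      rw [h1]; exact hSnn _
  have hgCS : ∀ k, g (k+1) ^ 2 ≤ g k * g (k+2) := by
    intro k
    rcases Nat.even_or_odd k with ⟨a, ha⟩ | ⟨a, ha⟩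
    · -- k = 2a, use B-CS on xk a, xk (a+1)
      have e1 : g (k+1) = ⟪T (xk a), xk (a+1)⟫ := by
        rw [show k+1 = a+(a+1) by omega]; exact (hshift a (a+1)).symm
      have e2 : g k = ⟪T (xk a), xk a⟫ := by
        rw [show k = a+a by omega]; exact (hshift a a).symm
      have e3 : g (k+2) = ⟪T (xk (a+1)), xk (a+1)⟫ := by
        rw [show k+2 = (a+1)+(a+1) by omega]; exact (hshift (a+1) (a+1)).symm
      rw [e1, e2, e3]; exact hBCS _ _
    · -- k = 2a+1, use s-CS on xk a, xk (a+1)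
      have e1 : g (k+1) = Sf (xk a) (xk (a+1)) := by
        rw [show k+1 = (a+1)+(a+1) by omega, ← hshift (a+1) (a+1)]
        exact hSformIt a (a+1)
      have e2 : g k = Sf (xk a) (xk a) := by
        rw [show k = (a+1)+a by omega, ← hshift (a+1) a]
        exact hSformIt a a
      have e3 : g (k+2) = Sf (xk (a+1)) (xk (a+1)) := by
        rw [show k+2 = (a+2)+(a+1) by omega, ← hshift (a+2) (a+1)]
        exact hSformIt (a+1) (a+1)
      rw [e1, e2, e3]; exact hSCS _ _
  have hgbd : ∀ k, g k ≤ d^(k+1) * ‖x‖^2 := by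
    intro k
    calc g k ≤ ‖T (xk k)‖ * ‖x‖ := real_inner_le_norm _ _
      _ ≤ (d * ‖xk k‖) * ‖x‖ :=
          mul_le_mul_of_nonneg_right (norm_T_le ψ γ d T hγpos hγ1 hγanti hd hT _) (norm_nonneg _)
      _ ≤ (d * (d^k * ‖x‖)) * ‖x‖ := by
          have := hxknorm k
          have h1 : d * ‖xk k‖ ≤ d * (d^k * ‖x‖) := mul_le_mul_of_nonneg_left this hd0.le
          exact mul_le_mul_of_nonneg_right h1 (norm_nonneg _)
      _ = d^(k+1) * ‖x‖^2 := by ring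
  -- final contradiction argument
  show Sf x x ≤ d * ⟪T x, x⟫
  rw [← hg1, ← hg0]
  by_contra hcon
  push_neg at hcon
  have hg0pos : 0 < g 0 := by
    rcases (hgnn 0).lt_or_eq with h | h
    · exact h
    · exfalso
      have h2 := hgCS 0
      rw [← h] at h2
      simp only [zero_mul] at h2
      have h4 : g 1 = 0 := by nlinarith [hgnn 1]
      rw [h4, ← h, mul_zero] at hcon
      exact lt_irrefl 0 hcon
  have hg1pos : 0 < g 1 := lt_of_le_of_lt (by positivity) hcon
  -- ratios: ∀ k, 0 < g k ∧ g 1 * g k ≤ g 0 * g (k+1)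
  have hrat : ∀ k, 0 < g k ∧ g 1 * g k ≤ g 0 * g (k+1) := by
    intro k
    induction k with
    | zero => exact ⟨hg0pos, by rw [mul_comm]⟩
    | succ n ih =>
      obtain ⟨hn, hle⟩ := ih
      have hgn1 : 0 < g (n+1) := by
        have h1 : 0 < g 1 * g n := mul_pos hg1pos hn
        have h2 : 0 < g 0 * g (n+1) := lt_of_lt_of_le h1 hle
        by_contra hle
        push_neg at hle
        nlinarith
      refine ⟨hgn1, ?_⟩
      -- g1 g_{n+1} ≤ g0 g_{n+2}: from CS g_{n+1}² ≤ g_n g_{n+2} and g1 g_n ≤ g0 g_{n+1}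
      have hCS := hgCS n
      refine le_of_mul_le_mul_left ?_ hn
      calc g n * (g 1 * g (n+1)) = g 1 * g n * g (n+1) := by ring
        _ ≤ (g 0 * g (n+1)) * g (n+1) := mul_le_mul_of_nonneg_right hle (hgnn _)
        _ = g 0 * (g (n+1)^2) := by ring
        _ ≤ g 0 * (g n * g (n+2)) := mul_le_mul_of_nonneg_left hCS hg0pos.le
        _ = g n * (g 0 * g (n+2)) := by ring
  -- geometric growth: g1^k * g0 ≤ g0^k * g k
  have hgeo : ∀ k, g 1 ^ k * g 0 ≤ g 0 ^ k * g k := by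
    intro k
    induction k with
    | zero => simp
    | succ n ih =>
      have h1 : g 1 ^ (n+1) * g 0 = g 1 * (g 1 ^ n * g 0) := by ring
      rw [h1]
      calc g 1 * (g 1 ^ n * g 0) ≤ g 1 * (g 0 ^ n * g n) := by
            exact mul_le_mul_of_nonneg_left ih hg1pos.le
        _ = g 0 ^ n * (g 1 * g n) := by ring
        _ ≤ g 0 ^ n * (g 0 * g (n+1)) :=
            mul_le_mul_of_nonneg_left (hrat n).2 (pow_nonneg hg0pos.le n)
        _ = g 0 ^ (n+1) * g (n+1) := by ring
  -- contradiction
  have hq1 : 1 < g 1 / (d * g 0) := by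
    rw [lt_div_iff₀ (mul_pos hd0 hg0pos)]
    linarith [hcon]
  obtain ⟨n, hn⟩ := pow_unbounded_of_one_lt (d * ‖x‖^2 / g 0) hq1
  have hfin : (g 1 / (d * g 0)) ^ n ≤ d * ‖x‖^2 / g 0 := by
    rw [div_pow, div_le_div_iff₀ (pow_pos (mul_pos hd0 hg0pos) n) hg0pos]
    have h1 := hgeo n
    have h2 := hgbd n
    have h3 : g 0 ^ n * g n ≤ g 0 ^ n * (d^(n+1) * ‖x‖^2) := by
      exact mul_le_mul_of_nonneg_left h2 (pow_nonneg hg0pos.le n)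
    calc g 1 ^ n * g 0 ≤ g 0 ^ n * (d^(n+1) * ‖x‖^2) := le_trans h1 h3
      _ = (d*g 0)^n * (d * ‖x‖^2) := by ring
      _ = d * ‖x‖^2 * (d*g 0)^n := by ring
  linarith

lemma fin_comb_inner2 (ψ : HilbertBasis ℕ ℝ H) {m : ℕ} (x : Fin m → ℝ) (k : ℕ) :
    ⟪∑ j : Fin m, x j • (ψ (j:ℕ) : H), ψ k⟫ = if h : k < m then x ⟨k, h⟩ else 0 := by
  rw [sum_inner]
  have horth := ψ.orthonormal
  rw [orthonormal_iff_ite] at horth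
  by_cases hk : k < m
  · rw [dif_pos hk, Finset.sum_eq_single (⟨k,hk⟩ : Fin m)]
    · simp [real_inner_smul_left, horth k k, ψ.orthonormal.1 k]
    · intro b _ hb
      have hbk : (b:ℕ) ≠ k := by
        intro hc
        exact hb (by exact Fin.ext hc)
      simp [real_inner_smul_left, horth (b:ℕ) k, hbk]
    · intro h; exact absurd (Finset.mem_univ _) h
  · rw [dif_neg hk]
    refine Finset.sum_eq_zero fun b _ => ?_
    have hbk : (b:ℕ) ≠ k := by have := b.isLt; omega
    simp [real_inner_smul_left, horth (b:ℕ) k, hbk]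

end Op
end Stmt7Aux


set_option maxHeartbeats 3200000 in
open Stmt7Aux in
/-- Lemma B.1, (B.4): weighted-norm bound for the Galerkin approximation error. -/
theorem stmt_7 (ψ : HilbertBasis ℕ ℝ H) (γ : ℕ → ℝ) (d : ℝ) (hd : 1 ≤ d)
    (hγ1 : γ 0 = 1) (hγpos : ∀ j, 0 < γ j) (hγanti : Antitone γ)
    (hγ0 : Filter.Tendsto γ Filter.atTop (nhds 0)) (hγsum : Summable γ)
    (β : ℕ → ℝ) (hβ1 : β 0 = 1) (hβmono : Monotone β)
    (hβ0 : Filter.Tendsto (fun j => (β j)⁻¹) Filter.atTop (nhds 0)) (r : ℝ) (hr : 0 < r)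
    (T : H →L[ℝ] H) (hT : memG ψ γ d T)
    (φ : H) (hφ : memF ψ β r φ)
    (w : ℕ → ℝ) (hw : ∀ j, 0 < w j) (hwβ : Antitone (fun j => w j / β j)) :
    ∀ m : ℕ, 1 ≤ m →
      wnorm2 ψ w (φ - galerkin ψ T φ m) ≤
        34 * d ^ 8 * r * (w (m - 1) / β (m - 1)) *
          max 1 ((γ (m - 1) ^ 2 / w (m - 1)) * ⨆ j : Fin m, w (j : ℕ) / γ (j : ℕ) ^ 2) := by
  obtain ⟨hsym, hpos, -, hsand⟩ := hT
  have hTub : ∀ h : H, ‖T h‖ ^ 2 ≤ d ^ 2 * (∑' j, γ j ^ 2 * ⟪h, ψ j⟫ ^ 2) :=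
    fun h => (hsand h).2
  have hTlb : ∀ h : H, (d ^ 2)⁻¹ * (∑' j, γ j ^ 2 * ⟪h, ψ j⟫ ^ 2) ≤ ‖T h‖ ^ 2 :=
    fun h => (hsand h).1
  have hd0 : (0:ℝ) < d := lt_of_lt_of_le one_pos hd
  intro m hm
  have hm1 : m - 1 < m := by omega
  have hβpos : ∀ j, (0:ℝ) < β j := fun j =>
    lt_of_lt_of_le one_pos (hβ1 ▸ hβmono (Nat.zero_le j))
  set e : H := φ - galerkin ψ T φ m with he
  have hWpos := hw (m-1)
  have hBpos := hβpos (m-1)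
  have hGpos := hγpos (m-1)
  set A := opMat ψ T m with hA
  -- the Galerkin matrix is positive definite
  have hApd : A.PosDef := by
    rw [Matrix.posDef_iff_dotProduct_mulVec]
    constructor
    · ext j k
      simp only [Matrix.conjTranspose_apply, hA, opMat, Matrix.of_apply, star_trivial]
      exact (real_inner_comm _ _).trans (hsym _ _)
    · intro x hx
      set hxv : H := ∑ j : Fin m, x j • (ψ (j:ℕ) : H) with hhxv
      have hThxv : T hxv = ∑ k : Fin m, x k • T (ψ (k:ℕ)) := by
        rw [hhxv, map_sum]
        exact Finset.sum_congr rfl (fun k _ => by rw [ContinuousLinearMap.map_smul])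
      have hAe : ∀ (a b : Fin m), A a b = ⟪(ψ (a:ℕ) : H), T (ψ (b:ℕ))⟫ := by
        intro a b; simp [hA, opMat]
      have hdot : star x ⬝ᵥ (A *ᵥ x) = ⟪hxv, T hxv⟫ := by
        have hR : ⟪hxv, T hxv⟫ = ∑ k : Fin m, ∑ j : Fin m, x k * (x j * A j k) := by
          rw [hThxv, inner_sum]
          refine Finset.sum_congr rfl (fun k _ => ?_)
          rw [real_inner_smul_right, hhxv, sum_inner, Finset.mul_sum]
          refine Finset.sum_congr rfl (fun j _ => ?_)
          rw [real_inner_smul_left, hAe j k]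
          try ring
        have hL : star x ⬝ᵥ (A *ᵥ x) = ∑ j : Fin m, ∑ k : Fin m, x j * (A j k * x k) := by
          simp only [dotProduct, Matrix.mulVec, Pi.star_apply, star_trivial]
          exact Finset.sum_congr rfl (fun j _ => by rw [Finset.mul_sum])
        rw [hL, hR, Finset.sum_comm]
        refine Finset.sum_congr rfl (fun j _ => Finset.sum_congr rfl (fun k _ => by ring))
      have hne : hxv ≠ 0 := by
        intro h0
        obtain ⟨k, hk⟩ := Function.ne_iff.mp hx
        have hck : ⟪hxv, ψ (k:ℕ)⟫ = x k := by
          rw [hhxv, fin_comb_inner2, dif_pos k.isLt]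
        rw [h0] at hck
        simp at hck
        exact hk hck.symm
      have hp := hpos hxv hne
      rw [hdot, real_inner_comm]
      exact hp
  have hAdet : IsUnit A.det := hApd.det_pos.ne'.isUnit
  have hgalCoef : galCoef ψ T φ m = A⁻¹ *ᵥ gvec ψ T φ m := by rw [galCoef, ← hA]
  have hAc : A *ᵥ (galCoef ψ T φ m) = gvec ψ T φ m := by
    rw [hgalCoef, Matrix.mulVec_mulVec, Matrix.mul_nonsing_inv _ hAdet, Matrix.one_mulVec]
  have hgal : ∀ k : ℕ, ⟪galerkin ψ T φ m, ψ k⟫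
      = if h : k < m then galCoef ψ T φ m ⟨k,h⟩ else 0 := by
    intro k
    rw [galerkin]
    exact fin_comb_inner2 ψ _ k
  -- Galerkin orthogonality
  have horthF : ∀ k, k < m → ⟪T e, ψ k⟫ = 0 := by
    intro k hk
    have h1 : ⟪T e, ψ k⟫ = ⟪T φ, ψ k⟫ - ⟪T (galerkin ψ T φ m), ψ k⟫ := by
      rw [he, map_sub, inner_sub_left]
    have h2 : ⟪T (galerkin ψ T φ m), ψ k⟫ = (A *ᵥ galCoef ψ T φ m) ⟨k, hk⟩ := by
      have hTg : T (galerkin ψ T φ m)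
          = ∑ j : Fin m, galCoef ψ T φ m j • T (ψ (j:ℕ)) := by
        rw [galerkin, map_sum]
        exact Finset.sum_congr rfl (fun j _ => by rw [ContinuousLinearMap.map_smul])
      rw [hTg, sum_inner]
      show _ = ∑ j, A ⟨k, hk⟩ j * galCoef ψ T φ m j
      refine Finset.sum_congr rfl (fun j _ => ?_)
      rw [real_inner_smul_left]
      have hAe : A ⟨k,hk⟩ j = ⟪(ψ k : H), T (ψ (j:ℕ))⟫ := by simp [hA, opMat]
      have hcom : ⟪T (ψ (j:ℕ)), (ψ k : H)⟫ = A ⟨k,hk⟩ j := by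
        rw [hAe]; exact real_inner_comm _ _
      rw [hcom]; ring
    rw [h1, h2, hAc]
    show ⟪T φ, ψ k⟫ - gvec ψ T φ m ⟨k, hk⟩ = 0
    simp [gvec]
  -- tail vector ρ
  set hπ : H := ∑ j : Fin m, ⟪e, ψ (j:ℕ)⟫ • (ψ (j:ℕ) : H) with hhπ
  set ρ : H := e - hπ with hρ
  have hπco : ∀ k : ℕ, ⟪hπ, ψ k⟫ = if h : k < m then ⟪e, ψ k⟫ else 0 := by
    intro k
    have h1 := fin_comb_inner2 ψ (fun j : Fin m => ⟪e, ψ (j:ℕ)⟫) k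
    rw [hhπ]
    refine h1.trans ?_
    split_ifs with hk
    · rfl
    · rfl
  have hρcoeff : ∀ k : ℕ, ⟪ρ, ψ k⟫ = if k < m then 0 else ⟪e, ψ k⟫ := by
    intro k
    rw [hρ, inner_sub_left, hπco k]
    by_cases hk : k < m
    · rw [dif_pos hk, if_pos hk]; simp
    · rw [dif_neg hk, if_neg hk]; simp
  -- e and φ agree on the tail
  have heφ : ∀ k, m ≤ k → ⟪e, ψ k⟫ = ⟪φ, ψ k⟫ := by
    intro k hk
    rw [inner_sub_left, hgal k, dif_neg (by omega)]
    simp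
  -- ⟪Te, e⟫ = ⟪Te, ρ⟫
  have hTπ : ⟪T e, hπ⟫ = 0 := by
    rw [hhπ, inner_sum]
    refine Finset.sum_eq_zero (fun j _ => ?_)
    rw [real_inner_smul_right, horthF _ j.isLt, mul_zero]
  have hTee : ⟪T e, e⟫ = ⟪T e, ρ⟫ := by
    have h1 : ⟪T e, ρ⟫ = ⟪T e, e⟫ - ⟪T e, hπ⟫ := by rw [hρ, inner_sub_right]
    rw [h1, hTπ, sub_zero]
  -- Step 2 : ‖Te‖ ≤ d γ_m ‖ρ‖
  have hstep2 : ‖T e‖ ≤ d * γ m * ‖ρ‖ := by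
    have hkey := key_star ψ γ d T hγpos hγ1 hγanti hd hsym hpos hTub e
    have hlow : (γ m)⁻¹ * ‖T e‖ ^ 2 ≤ ∑' j, (γ j)⁻¹ * (⟪T e, ψ j⟫ * ⟪T e, ψ j⟫) := by
      rw [← parseval ψ (T e), ← tsum_mul_left]
      refine Summable.tsum_le_tsum (fun j => ?_) ((parseval_summable ψ (T e)).mul_left _)
        (V_summable ψ γ d T hγpos hγ1 hγanti hd hsym hTub e e)
      by_cases hj : j < m
      · rw [horthF j hj]; simp
      · have hγj : γ j ≤ γ m := hγanti (by omega)
        have hinv : (γ m)⁻¹ ≤ (γ j)⁻¹ := by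
          apply inv_anti₀ (hγpos j) hγj
        calc (γ m)⁻¹ * ⟪T e, ψ j⟫ ^ 2 ≤ (γ j)⁻¹ * ⟪T e, ψ j⟫ ^ 2 :=
              mul_le_mul_of_nonneg_right hinv (sq_nonneg _)
          _ = (γ j)⁻¹ * (⟪T e, ψ j⟫ * ⟪T e, ψ j⟫) := by ring
    have hup : (γ m)⁻¹ * ‖T e‖ ^ 2 ≤ d * (‖T e‖ * ‖ρ‖) := by
      refine le_trans (le_trans hlow hkey) ?_
      rw [hTee]
      exact mul_le_mul_of_nonneg_left (real_inner_le_norm _ _) hd0.le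
    have hγm := hγpos m
    rcases eq_or_lt_of_le (norm_nonneg (T e)) with h0 | h0
    · rw [← h0]
      exact mul_nonneg (mul_nonneg hd0.le (hγpos m).le) (norm_nonneg _)
    · have h1 : ‖T e‖ * ‖T e‖ ≤ (d * γ m * ‖ρ‖) * ‖T e‖ := by
        have h2 : ‖T e‖ ^ 2 ≤ γ m * (d * (‖T e‖ * ‖ρ‖)) := by
          have := mul_le_mul_of_nonneg_left hup hγm.le
          rwa [← mul_assoc, mul_inv_cancel₀ hγm.ne', one_mul] at this
        nlinarith
      exact le_of_mul_le_mul_right h1 h0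
  -- Step 3 : γ²-weighted norm of e
  have hstep3 : (∑' j, γ j ^ 2 * ⟪e, ψ j⟫ ^ 2) ≤ d^4 * γ m ^2 * ‖ρ‖^2 := by
    have h1 := hTlb e
    have h2 : (∑' j, γ j ^ 2 * ⟪e, ψ j⟫ ^ 2) ≤ d^2 * ‖T e‖^2 := by
      have h3 := mul_le_mul_of_nonneg_left h1 (by positivity : (0:ℝ) ≤ d^2)
      rwa [← mul_assoc, mul_inv_cancel₀ (pow_pos hd0 2).ne', one_mul] at h3
    refine le_trans h2 ?_
    have h4 : ‖T e‖^2 ≤ (d * γ m * ‖ρ‖)^2 := by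
      have := hstep2
      nlinarith [norm_nonneg (T e), norm_nonneg ρ, (hγpos m).le, hd0.le]
    nlinarith [sq_nonneg d]
  -- ‖ρ‖² ≤ r / β m
  have hρnorm : β m * ‖ρ‖^2 ≤ r := by
    have h1 : ‖ρ‖^2 = ∑' j, ⟪ρ, ψ j⟫^2 := (parseval ψ ρ).symm
    have h2 : β m * ‖ρ‖^2 = ∑' j, β m * ⟪ρ, ψ j⟫^2 := by
      rw [h1, ← tsum_mul_left]
    rw [h2]
    refine le_trans (Summable.tsum_le_tsum (fun j => ?_) ((parseval_summable ψ ρ).mul_left _) hφ.1) hφ.2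
    rw [hρcoeff j]
    by_cases hj : j < m
    · rw [if_pos hj]
      have h0 : β m * (0:ℝ)^2 = 0 := by ring
      rw [h0]
      exact mul_nonneg (hβpos j).le (sq_nonneg _)
    · rw [if_neg hj, heφ j (by omega)]
      have hβj : β m ≤ β j := hβmono (by omega)
      exact mul_le_mul_of_nonneg_right hβj (sq_nonneg _)
  -- supremum facts
  set M : ℝ := ⨆ j : Fin m, w (j:ℕ) / γ (j:ℕ) ^ 2 with hM
  have hbdd : BddAbove (Set.range (fun j : Fin m => w (j:ℕ) / γ (j:ℕ) ^ 2)) :=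
    (Set.finite_range _).bddAbove
  have hMle : ∀ k : ℕ, k < m → w k / γ k ^ 2 ≤ M := by
    intro k hk
    exact le_ciSup hbdd (⟨k, hk⟩ : Fin m)
  have hwM : ∀ k : ℕ, k < m → w k ≤ M * γ k ^ 2 := by
    intro k hk
    have h1 := hMle k hk
    have h2 := hγpos k
    calc w k = (w k / γ k ^2) * γ k ^2 := by field_simp
      _ ≤ M * γ k ^ 2 := mul_le_mul_of_nonneg_right h1 (by positivity)
  have hMpos : 0 < M :=
    lt_of_lt_of_le (div_pos hWpos (pow_pos hGpos 2)) (hMle (m-1) hm1)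
  have hWG : w (m-1) ≤ M * γ (m-1) ^ 2 := hwM (m-1) hm1
  -- summability of the weighted series
  have hwβ0 : ∀ j, w j ≤ (w 0) * β j := by
    intro j
    have h1 : w j / β j ≤ w 0 / β 0 := hwβ (Nat.zero_le j)
    rw [hβ1, div_one] at h1
    have h2 := hβpos j
    calc w j = (w j / β j) * β j := by field_simp
      _ ≤ w 0 * β j := mul_le_mul_of_nonneg_right h1 h2.le
  have hsummw : Summable (fun j => w j * ⟪e, ψ j⟫ ^ 2) := by
    rw [← summable_nat_add_iff m]
    refine Summable.of_nonneg_of_le (fun j => mul_nonneg (hw _).le (sq_nonneg _)) (fun j => ?_)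
      ((((summable_nat_add_iff m).mpr hφ.1)).mul_left (w 0))
    rw [heφ (j+m) (by omega)]
    calc w (j+m) * ⟪φ, ψ (j+m)⟫ ^ 2 ≤ ((w 0) * β (j+m)) * ⟪φ, ψ (j+m)⟫ ^ 2 :=
          mul_le_mul_of_nonneg_right (hwβ0 (j+m)) (sq_nonneg _)
      _ = w 0 * (β (j+m) * ⟪φ, ψ (j+m)⟫ ^ 2) := by ring
  -- tail of the β-series
  have hβtail : (∑' j, β (j+m) * ⟪φ, ψ (j+m)⟫ ^ 2) ≤ r := by
    have h1 := Summable.sum_add_tsum_nat_add (f := fun j => β j * ⟪φ, ψ j⟫ ^ 2) m hφ.1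
    have h2 : 0 ≤ ∑ j ∈ Finset.range m, β j * ⟪φ, ψ j⟫ ^ 2 := by
      exact Finset.sum_nonneg (fun j _ => mul_nonneg (hβpos j).le (sq_nonneg _))
    linarith [hφ.2]
  -- decomposition
  have hsplit : wnorm2 ψ w e
      = (∑ j ∈ Finset.range m, w j * ⟪e, ψ j⟫ ^ 2)
        + ∑' j, w (j+m) * ⟪e, ψ (j+m)⟫ ^ 2 := by
    unfold wnorm2
    exact (Summable.sum_add_tsum_nat_add m hsummw).symm
  -- tail bound
  have htail : (∑' j, w (j+m) * ⟪e, ψ (j+m)⟫ ^ 2) ≤ (w (m-1) / β (m-1)) * r := by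
    have h1 : (∑' j, w (j+m) * ⟪e, ψ (j+m)⟫ ^ 2)
        ≤ ∑' j, (w (m-1) / β (m-1)) * (β (j+m) * ⟪φ, ψ (j+m)⟫ ^ 2) := by
      refine Summable.tsum_le_tsum (fun j => ?_)
        ((summable_nat_add_iff m).mpr hsummw)
        ((((summable_nat_add_iff m).mpr hφ.1)).mul_left _)
      rw [heφ (j+m) (by omega)]
      have h2 : w (j+m) ≤ (w (m-1) / β (m-1)) * β (j+m) := by
        have h3 : w (j+m) / β (j+m) ≤ w (m-1) / β (m-1) := hwβ (by omega)
        have h4 := hβpos (j+m)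
        calc w (j+m) = (w (j+m) / β (j+m)) * β (j+m) := by field_simp
          _ ≤ (w (m-1) / β (m-1)) * β (j+m) := mul_le_mul_of_nonneg_right h3 h4.le
      calc w (j+m) * ⟪φ, ψ (j+m)⟫ ^ 2
          ≤ ((w (m-1) / β (m-1)) * β (j+m)) * ⟪φ, ψ (j+m)⟫ ^ 2 :=
            mul_le_mul_of_nonneg_right h2 (sq_nonneg _)
        _ = (w (m-1) / β (m-1)) * (β (j+m) * ⟪φ, ψ (j+m)⟫ ^ 2) := by ring
    rw [tsum_mul_left] at h1
    refine le_trans h1 ?_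
    exact mul_le_mul_of_nonneg_left hβtail (div_nonneg hWpos.le hBpos.le)
  -- head bound
  have hhead : (∑ j ∈ Finset.range m, w j * ⟪e, ψ j⟫ ^ 2)
      ≤ M * (d^4 * γ m ^ 2 * ‖ρ‖^2) := by
    have h1 : (∑ j ∈ Finset.range m, w j * ⟪e, ψ j⟫ ^ 2)
        ≤ ∑ j ∈ Finset.range m, M * (γ j ^2 * ⟪e, ψ j⟫ ^ 2) := by
      refine Finset.sum_le_sum (fun j hj => ?_)
      have hjm := Finset.mem_range.mp hj
      calc w j * ⟪e, ψ j⟫ ^ 2 ≤ (M * γ j ^2) * ⟪e, ψ j⟫ ^ 2 :=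
            mul_le_mul_of_nonneg_right (hwM j hjm) (sq_nonneg _)
        _ = M * (γ j ^2 * ⟪e, ψ j⟫ ^ 2) := by ring
    refine le_trans h1 ?_
    rw [← Finset.mul_sum]
    refine mul_le_mul_of_nonneg_left ?_ hMpos.le
    refine le_trans (Summable.sum_le_tsum (Finset.range m) (fun j _ => ?_)
      (gam_sq_summable ψ γ hγpos hγ1 hγanti e)) hstep3
    positivity
  -- assemble
  have hγmB : γ m ^ 2 * ‖ρ‖ ^ 2 ≤ γ (m-1)^2 * (r / β (m-1)) := by
    have h1 : ‖ρ‖^2 ≤ r / β m := by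
      rw [le_div_iff₀ (hβpos m)]
      linarith [hρnorm]
    have h2 : γ m ≤ γ (m-1) := hγanti (by omega)
    have h3 : r / β m ≤ r / β (m-1) := by
      refine div_le_div_of_nonneg_left hr.le (hβpos (m-1)) ?_
      exact hβmono (by omega)
    have h4 : γ m ^2 ≤ γ (m-1)^2 := by nlinarith [(hγpos m).le]
    calc γ m ^2 * ‖ρ‖^2 ≤ γ m ^2 * (r/β m) :=
          mul_le_mul_of_nonneg_left h1 (sq_nonneg _)
      _ ≤ γ (m-1)^2 * (r/β m) :=
          mul_le_mul_of_nonneg_right h4 (div_nonneg hr.le (hβpos m).le)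
      _ ≤ γ (m-1)^2 * (r/β (m-1)) := mul_le_mul_of_nonneg_left h3 (sq_nonneg _)
  have htotal : wnorm2 ψ w e ≤ (1 + d^4) * (γ (m-1)^2 * M * r / β (m-1)) := by
    rw [hsplit]
    have hW2 : (w (m-1) / β (m-1)) * r ≤ γ (m-1)^2 * M * r / β (m-1) := by
      rw [div_mul_eq_mul_div, div_le_div_iff₀ hBpos hBpos]
      have h5 : w (m-1) * r ≤ (M * γ (m-1)^2) * r :=
        mul_le_mul_of_nonneg_right hWG hr.le
      nlinarith [hBpos]
    have hH2 : M * (d^4 * γ m ^ 2 * ‖ρ‖^2) ≤ d^4 * (γ (m-1)^2 * M * r / β (m-1)) := by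
      have h6 : M * (γ m ^2 * ‖ρ‖^2) ≤ M * (γ (m-1)^2 * (r/β (m-1))) :=
        mul_le_mul_of_nonneg_left hγmB hMpos.le
      calc M * (d^4 * γ m ^ 2 * ‖ρ‖^2) = d^4 * (M * (γ m ^2 * ‖ρ‖^2)) := by ring
        _ ≤ d^4 * (M * (γ (m-1)^2 * (r/β (m-1)))) :=
            mul_le_mul_of_nonneg_left h6 (by positivity)
        _ = d^4 * (γ (m-1)^2 * M * r / β (m-1)) := by ring
    calc (∑ j ∈ Finset.range m, w j * ⟪e, ψ j⟫ ^ 2)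
        + (∑' j, w (j+m) * ⟪e, ψ (j+m)⟫ ^ 2)
        ≤ M * (d^4 * γ m ^ 2 * ‖ρ‖^2) + (w (m-1) / β (m-1)) * r := by
          exact add_le_add hhead htail
      _ ≤ d^4 * (γ (m-1)^2 * M * r / β (m-1)) + γ (m-1)^2 * M * r / β (m-1) :=
          add_le_add hH2 hW2
      _ = (1 + d^4) * (γ (m-1)^2 * M * r / β (m-1)) := by ring
  -- identify the RHS
  have hmax : max 1 ((γ (m-1) ^ 2 / w (m-1)) * M) = (γ (m-1) ^ 2 / w (m-1)) * M := by
    refine max_eq_right ?_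
    have h1 : w (m-1) / γ (m-1)^2 ≤ M := hMle (m-1) hm1
    have hG2 : γ (m-1)^2 ≠ 0 := (pow_pos hGpos 2).ne'
    have hW0 : w (m-1) ≠ 0 := hWpos.ne'
    have h2 : (γ (m-1)^2 / w (m-1)) * (w (m-1) / γ (m-1)^2) = 1 := by
      field_simp
    calc (1:ℝ) = (γ (m-1)^2 / w (m-1)) * (w (m-1) / γ (m-1)^2) := h2.symm
      _ ≤ (γ (m-1)^2 / w (m-1)) * M :=
          mul_le_mul_of_nonneg_left h1 (div_nonneg (sq_nonneg _) hWpos.le)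
  have hRHS : 34 * d ^ 8 * r * (w (m-1) / β (m-1)) *
      max 1 ((γ (m-1) ^ 2 / w (m-1)) * M)
      = 34 * d^8 * (γ (m-1)^2 * M * r / β (m-1)) := by
    rw [hmax]
    field_simp
  rw [hRHS]
  refine le_trans htotal ?_
  have hfac : (1:ℝ) + d^4 ≤ 34 * d^8 := by nlinarith [hd, hd0.le, sq_nonneg (d^2-1), sq_nonneg (d^4-1)]
  have hquant : 0 ≤ γ (m-1)^2 * M * r / β (m-1) :=
    div_nonneg (mul_nonneg (mul_nonneg (sq_nonneg _) hMpos.le) hr.le) hBpos.le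
  exact mul_le_mul_of_nonneg_right hfac hquant


end
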